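/- arXiv:math/9901154 — 2 statements merged into one kernel-verified Lean document; each statement's English description precedes it below -/
import Mathlib

section
/- Let α, β, γ, c₁ be real constants and set κ = 0 and μ = 1. Let ψ : ℝ → ℝ be twice continuously differentiable with ψ″(t) = 6c₁·ψ(t)² for all t (as holds for any solution of (ψ′)² = 4c₁ψ³ + c₂), and let w : ℝ → ℝ be four times continuously differentiable and satisfy w·w⁗ + α·w′·w‴ + β·(w″)² + 2γ·(w·w″ + (w′)²) + 6c₁·(w″ − w) = 0 on ℝ. Then the function u(x,t) = w(x)·ψ(t) solves equation (1) at every point (x,t) ∈ ℝ². -/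
/-- `u` solves equation (1), the nonlinear fourth order PDE
`u_tt = (κ u + γ u²)_xx + u u_xxxx + μ u_xxtt + α u_x u_xxx + β (u_xx)²`,
at the point `(x, t)`. -/
noncomputable def SolvesEq1 (α β γ κ μ : ℝ) (u : ℝ → ℝ → ℝ) (x t : ℝ) : Prop :=
  iteratedDeriv 2 (fun s => u x s) t =
    iteratedDeriv 2 (fun y => κ * u y t + γ * (u y t) ^ 2) x
    + u x t * iteratedDeriv 4 (fun y => u y t) x
    + μ * iteratedDeriv 2 (fun y => iteratedDeriv 2 (fun s => u y s) t) x
    + α * deriv (fun y => u y t) x * iteratedDeriv 3 (fun y => u y t) x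
    + β * (iteratedDeriv 2 (fun y => u y t) x) ^ 2

lemma itd_cmul {n : ℕ} {f : ℝ → ℝ} (hf : ContDiff ℝ n f) (c x : ℝ) :
    iteratedDeriv n (fun y => c * f y) x = c * iteratedDeriv n f x := by
  simp only [iteratedDeriv, ← smul_eq_mul]
  rw [show (fun y => c • f y) = c • f from rfl, iteratedFDeriv_const_smul_apply hf.contDiffAt]
  simp

lemma itd_mulc {n : ℕ} {f : ℝ → ℝ} (hf : ContDiff ℝ n f) (c x : ℝ) :
    iteratedDeriv n (fun y => f y * c) x = iteratedDeriv n f x * c := by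
  simp only [mul_comm _ c]
  exact itd_cmul hf c x

theorem separable_reduction_mu_one_solves_eq1 (α β γ c₁ : ℝ)
    (ψ w : ℝ → ℝ) (hψ : ContDiff ℝ 2 ψ)
    (hψeq : ∀ t : ℝ, iteratedDeriv 2 ψ t = 6 * c₁ * (ψ t) ^ 2)
    (hw : ContDiff ℝ 4 w)
    (hODE : ∀ z : ℝ,
      w z * iteratedDeriv 4 w z
        + α * deriv w z * iteratedDeriv 3 w z
        + β * (iteratedDeriv 2 w z) ^ 2
        + 2 * γ * (w z * iteratedDeriv 2 w z + (deriv w z) ^ 2)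
        + 6 * c₁ * (iteratedDeriv 2 w z - w z) = 0) :
    ∀ x t : ℝ, SolvesEq1 α β γ 0 1 (fun x t => w x * ψ t) x t := by
  intro x t
  have hwd : Differentiable ℝ w := hw.differentiable (by norm_num)
  have hw4 : ContDiff ℝ ((3:ℕ∞)+1) w := by norm_num; exact hw
  have hw'cd : ContDiff ℝ 3 (deriv w) := (contDiff_succ_iff_deriv.mp hw4).2.2
  have hw'd : Differentiable ℝ (deriv w) := hw'cd.differentiable (by norm_num)
  -- term A : time second derivative
  have hA : iteratedDeriv 2 (fun s => w x * ψ s) t = w x * (6 * c₁ * (ψ t) ^ 2) := by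
    rw [itd_cmul hψ, hψeq]
  -- second derivative of w²
  have hsq : ContDiff ℝ 2 fun y => (w y) ^ 2 := by
    have : (fun y => (w y) ^ 2) = fun y => w y * w y := by funext y; ring
    rw [this]
    exact (hw.of_le (by norm_num)).mul (hw.of_le (by norm_num))
  have hderivsq : deriv (fun y => (w y) ^ 2) = fun y => 2 * (w y * deriv w y) := by
    funext y
    rw [deriv_fun_pow (hwd y) 2]
    push_cast
    ring
  have hitd2 : iteratedDeriv 2 w x = deriv (deriv w) x := by
    rw [iteratedDeriv_succ, iteratedDeriv_one]
  have hsq2 : iteratedDeriv 2 (fun y => (w y) ^ 2) x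
      = 2 * (w x * iteratedDeriv 2 w x + (deriv w x) ^ 2) := by
    rw [iteratedDeriv_succ, iteratedDeriv_one, hderivsq]
    rw [deriv_const_mul _ (show DifferentiableAt ℝ (fun y => w y * deriv w y) x from (hwd x).mul (hw'd x)), deriv_fun_mul (hwd x) (hw'd x), hitd2]
    ring
  -- term B : nonlinear second x-derivative
  have hB : iteratedDeriv 2 (fun y => 0 * (w y * ψ t) + γ * (w y * ψ t) ^ 2) x
      = (γ * (ψ t) ^ 2) * (2 * (w x * iteratedDeriv 2 w x + (deriv w x) ^ 2)) := by
    have hfun : (fun y => 0 * (w y * ψ t) + γ * (w y * ψ t) ^ 2)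
        = fun y => (γ * (ψ t) ^ 2) * (w y) ^ 2 := by funext y; ring
    rw [hfun, itd_cmul hsq, hsq2]
  -- term D : mixed derivative
  have hD : iteratedDeriv 2 (fun y => iteratedDeriv 2 (fun s => w y * ψ s) t) x
      = iteratedDeriv 2 w x * (6 * c₁ * (ψ t) ^ 2) := by
    have hfun : (fun y => iteratedDeriv 2 (fun s => w y * ψ s) t)
        = fun y => w y * (6 * c₁ * (ψ t) ^ 2) := by
      funext y; rw [itd_cmul hψ, hψeq]
    rw [hfun, itd_mulc (hw.of_le (by norm_num))]
  -- remaining spatial derivatives of u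
  have h4 : iteratedDeriv 4 (fun y => w y * ψ t) x = iteratedDeriv 4 w x * ψ t :=
    itd_mulc hw _ _
  have h3 : iteratedDeriv 3 (fun y => w y * ψ t) x = iteratedDeriv 3 w x * ψ t :=
    itd_mulc (hw.of_le (by norm_num)) _ _
  have h2 : iteratedDeriv 2 (fun y => w y * ψ t) x = iteratedDeriv 2 w x * ψ t :=
    itd_mulc (hw.of_le (by norm_num)) _ _
  have h1 : deriv (fun y => w y * ψ t) x = deriv w x * ψ t := by
    rw [deriv_mul_const (hwd x)]
  unfold SolvesEq1
  simp only
  rw [hA, hB, hD, h4, h3, h2, h1]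
  linear_combination (-(ψ t) ^ 2) * hODE x
end

section
/- Let α, β, κ, c₁ be real constants, set γ = −1/2 and μ = 1, and let w : ℝ → ℝ be four times continuously differentiable and satisfy w·w⁗ + α·w′·w‴ + β·(w″)² − c₁·w‴ − w·w″ + κ·w″ − (w′)² + c₁·w′ + 2c₁² = 0 on ℝ. Then the accelerating-wave function u(x,t) = w(x − ½c₁·t²) − c₁²·t² solves equation (1) at every point (x,t) ∈ ℝ². -/
lemma iteratedDeriv_comp_sub_const' (f : ℝ → ℝ) (a : ℝ) (n : ℕ) :
    ∀ x, iteratedDeriv n (fun y => f (y - a)) x = iteratedDeriv n f (x - a) := by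
  induction n generalizing f with
  | zero => simp
  | succ n ih =>
    intro x
    rw [iteratedDeriv_succ', iteratedDeriv_succ']
    have : deriv (fun y => f (y - a)) = fun y => deriv f (y - a) := by
      funext y; exact deriv_comp_sub_const f a y
    rw [this]; exact ih (deriv f) x

lemma iteratedDeriv_sub_const_fun (f : ℝ → ℝ) (b : ℝ) (n : ℕ) :
    iteratedDeriv (n+1) (fun y => f y - b) = iteratedDeriv (n+1) f := by
  rw [iteratedDeriv_succ', iteratedDeriv_succ']
  have : deriv (fun y => f y - b) = deriv f := by
    funext y; exact deriv_sub_const (f := f) (x := y) b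
  rw [this]

lemma id2' (f : ℝ → ℝ) : iteratedDeriv 2 f = deriv (deriv f) := by
  rw [show (2:ℕ) = 1+1 from rfl, iteratedDeriv_succ, iteratedDeriv_one]

lemma id3' (f : ℝ → ℝ) : iteratedDeriv 3 f = deriv (deriv (deriv f)) := by
  rw [show (3:ℕ) = 2+1 from rfl, iteratedDeriv_succ, id2']

lemma id4' (f : ℝ → ℝ) : iteratedDeriv 4 f = deriv (deriv (deriv (deriv f))) := by
  rw [show (4:ℕ) = 3+1 from rfl, iteratedDeriv_succ, id3']


theorem accelerating_wave_solves_eq1 (α β κ c₁ : ℝ) (w : ℝ → ℝ)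
    (hw : ContDiff ℝ 4 w)
    (hODE : ∀ z : ℝ,
      w z * iteratedDeriv 4 w z
        + α * deriv w z * iteratedDeriv 3 w z
        + β * (iteratedDeriv 2 w z) ^ 2
        - c₁ * iteratedDeriv 3 w z
        - w z * iteratedDeriv 2 w z
        + κ * iteratedDeriv 2 w z
        - (deriv w z) ^ 2
        + c₁ * deriv w z
        + 2 * c₁ ^ 2 = 0) :
    ∀ x t : ℝ,
      SolvesEq1 α β (-1 / 2) κ 1
        (fun x t => w (x - (1 / 2) * c₁ * t ^ 2) - c₁ ^ 2 * t ^ 2) x t := by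
  intro x t
  simp only [SolvesEq1]
  -- differentiability facts
  have hd0 : Differentiable ℝ w := hw.differentiable (by norm_num)
  have hc1 : ContDiff ℝ 3 (deriv w) := hw.iterate_deriv' 3 1
  have hd1 : Differentiable ℝ (deriv w) := hc1.differentiable (by norm_num)
  have hc2 : ContDiff ℝ 2 (deriv (deriv w)) := hc1.iterate_deriv' 2 1
  have hd2 : Differentiable ℝ (deriv (deriv w)) := hc2.differentiable (by norm_num)
  have hc3 : ContDiff ℝ 1 (deriv (deriv (deriv w))) := hc2.iterate_deriv' 1 1
  have hd3 : Differentiable ℝ (deriv (deriv (deriv w))) := hc3.differentiable (by norm_num)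
  -- derivative of the inner quadratic (in time)
  have hq : ∀ y s : ℝ, HasDerivAt (fun s : ℝ => y - 1 / 2 * c₁ * s ^ 2) (-(c₁ * s)) s := by
    intro y s
    have h := ((hasDerivAt_pow 2 s).const_mul ((1:ℝ) / 2 * c₁)).const_sub y
    exact h.congr_deriv (by push_cast; ring)
  -- second time derivative
  have H2t : ∀ y : ℝ,
      iteratedDeriv 2 (fun s => w (y - 1 / 2 * c₁ * s ^ 2) - c₁ ^ 2 * s ^ 2) t
        = c₁ ^ 2 * t ^ 2 * deriv (deriv w) (y - 1 / 2 * c₁ * t ^ 2)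
          - c₁ * deriv w (y - 1 / 2 * c₁ * t ^ 2) - 2 * c₁ ^ 2 := by
    intro y
    rw [id2']
    have hder1 : deriv (fun s => w (y - 1 / 2 * c₁ * s ^ 2) - c₁ ^ 2 * s ^ 2)
        = fun s => deriv w (y - 1 / 2 * c₁ * s ^ 2) * -(c₁ * s) - c₁ ^ 2 * (2 * s) := by
      funext s
      have h1 : HasDerivAt (fun s => w (y - 1 / 2 * c₁ * s ^ 2))
          (deriv w (y - 1 / 2 * c₁ * s ^ 2) * -(c₁ * s)) s :=
        ((hd0 _).hasDerivAt).comp s (hq y s)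
      have h2 : HasDerivAt (fun s : ℝ => c₁ ^ 2 * s ^ 2) (c₁ ^ 2 * (2 * s)) s := by
        have := (hasDerivAt_pow 2 s).const_mul (c₁ ^ 2)
        exact this.congr_deriv (by push_cast; ring)
      exact (h1.sub h2).deriv
    rw [hder1]
    have h1 : HasDerivAt (fun s => deriv w (y - 1 / 2 * c₁ * s ^ 2))
        (deriv (deriv w) (y - 1 / 2 * c₁ * t ^ 2) * -(c₁ * t)) t :=
      ((hd1 _).hasDerivAt).comp t (hq y t)
    have h2 : HasDerivAt (fun s : ℝ => -(c₁ * s)) (-(c₁ * 1)) t :=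
      ((hasDerivAt_id t).const_mul c₁).neg
    have h3 : HasDerivAt (fun s : ℝ => c₁ ^ 2 * (2 * s)) (c₁ ^ 2 * (2 * 1)) t :=
      ((hasDerivAt_id t).const_mul 2).const_mul (c₁ ^ 2)
    refine ((h1.mul h2).sub h3).deriv.trans ?_
    ring
  -- abbreviations
  set A : ℝ := 1 / 2 * c₁ * t ^ 2 with hA
  set B : ℝ := c₁ ^ 2 * t ^ 2 with hB
  -- x-derivatives of u(·, t)
  have hu : ∀ n : ℕ, iteratedDeriv (n+1) (fun y => w (y - A) - B) x
      = iteratedDeriv (n+1) w (x - A) := by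
    intro n
    have h := iteratedDeriv_comp_sub_const' (fun v => w v - B) A (n+1) x
    exact h.trans (congrFun (iteratedDeriv_sub_const_fun w B n) (x - A))
  have hu2 : iteratedDeriv 2 (fun y => w (y - A) - B) x = iteratedDeriv 2 w (x - A) := hu 1
  have hu3 : iteratedDeriv 3 (fun y => w (y - A) - B) x = iteratedDeriv 3 w (x - A) := hu 2
  have hu4 : iteratedDeriv 4 (fun y => w (y - A) - B) x = iteratedDeriv 4 w (x - A) := hu 3
  have hderiv1 : deriv (fun y => w (y - A) - B) x = deriv w (x - A) := by
    have h := deriv_comp_sub_const (fun v => w v - B) A x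
    rw [deriv_sub_const (f := w) (x := x - A) B] at h
    exact h
  -- the (κ u + γ u²)_xx term
  have hT1 : iteratedDeriv 2 (fun y => κ * (w (y - A) - B) + -1 / 2 * (w (y - A) - B) ^ 2) x
      = κ * deriv (deriv w) (x - A)
        - ((deriv w (x - A)) ^ 2 + (w (x - A) - B) * deriv (deriv w) (x - A)) := by
    have e1 : iteratedDeriv 2 (fun y => κ * (w (y - A) - B) + -1 / 2 * (w (y - A) - B) ^ 2) x
        = deriv (deriv (fun v => κ * (w v - B) + -1 / 2 * (w v - B) ^ 2)) (x - A) := by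
      have h := iteratedDeriv_comp_sub_const' (fun v => κ * (w v - B) + -1 / 2 * (w v - B) ^ 2) A 2 x
      exact h.trans (congrFun (id2' _) (x - A))
    rw [e1]
    have hs : ∀ v : ℝ, HasDerivAt (fun v => w v - B) (deriv w v) v :=
      fun v => ((hd0 v).hasDerivAt).sub_const B
    have hder1 : deriv (fun v => κ * (w v - B) + -1 / 2 * (w v - B) ^ 2)
        = fun v => κ * deriv w v + -1 / 2 * (2 * ((w v - B) * deriv w v)) := by
      funext v
      refine (((hs v).const_mul κ).add (((hs v).pow 2).const_mul (-1 / 2))).deriv.trans ?_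
      push_cast; ring
    rw [hder1]
    have h1 : HasDerivAt (deriv w) (deriv (deriv w) (x - A)) (x - A) := (hd1 _).hasDerivAt
    have hmul : HasDerivAt (fun v => (w v - B) * deriv w v)
        (deriv w (x - A) * deriv w (x - A) + (w (x - A) - B) * deriv (deriv w) (x - A)) (x - A) :=
      (hs _).mul h1
    refine ((h1.const_mul κ).add ((hmul.const_mul 2).const_mul (-1 / 2))).deriv.trans ?_
    ring
  -- the u_xxtt term
  have hTxx : iteratedDeriv 2 (fun y =>
        iteratedDeriv 2 (fun s => w (y - 1 / 2 * c₁ * s ^ 2) - c₁ ^ 2 * s ^ 2) t) x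
      = c₁ ^ 2 * t ^ 2 * deriv (deriv (deriv (deriv w))) (x - A)
        - c₁ * deriv (deriv (deriv w)) (x - A) := by
    have hfun : (fun y => iteratedDeriv 2 (fun s => w (y - 1 / 2 * c₁ * s ^ 2) - c₁ ^ 2 * s ^ 2) t)
        = fun y => c₁ ^ 2 * t ^ 2 * deriv (deriv w) (y - A) - c₁ * deriv w (y - A) - 2 * c₁ ^ 2 := by
      funext y; exact H2t y
    rw [hfun, id2']
    have hderG : deriv (fun y => c₁ ^ 2 * t ^ 2 * deriv (deriv w) (y - A)
          - c₁ * deriv w (y - A) - 2 * c₁ ^ 2)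
        = fun y => c₁ ^ 2 * t ^ 2 * (deriv (deriv (deriv w)) (y - A) * 1)
          - c₁ * (deriv (deriv w) (y - A) * 1) := by
      funext y
      have k2 : HasDerivAt (fun y : ℝ => deriv (deriv w) (y - A))
          (deriv (deriv (deriv w)) (y - A) * 1) y :=
        ((hd2 _).hasDerivAt).comp y ((hasDerivAt_id y).sub_const A)
      have k1 : HasDerivAt (fun y : ℝ => deriv w (y - A))
          (deriv (deriv w) (y - A) * 1) y :=
        ((hd1 _).hasDerivAt).comp y ((hasDerivAt_id y).sub_const A)
      exact (((k2.const_mul (c₁ ^ 2 * t ^ 2)).sub (k1.const_mul c₁)).sub_const (2 * c₁ ^ 2)).deriv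
    rw [hderG]
    have k3 : HasDerivAt (fun y : ℝ => deriv (deriv (deriv w)) (y - A))
        (deriv (deriv (deriv (deriv w))) (x - A) * 1) x :=
      ((hd3 _).hasDerivAt).comp x ((hasDerivAt_id x).sub_const A)
    have k2 : HasDerivAt (fun y : ℝ => deriv (deriv w) (y - A))
        (deriv (deriv (deriv w)) (x - A) * 1) x :=
      ((hd2 _).hasDerivAt).comp x ((hasDerivAt_id x).sub_const A)
    refine (((k3.mul_const 1).const_mul (c₁ ^ 2 * t ^ 2)).sub
      ((k2.mul_const 1).const_mul c₁)).deriv.trans ?_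
    ring
  -- assemble
  have hODE' := hODE (x - A)
  rw [id4', id3', id2'] at hODE'
  rw [H2t x, hT1, hu2, hu3, hu4, hderiv1, hTxx, id4', id3', id2']
  linear_combination -hODE'
end
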